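/- arXiv:0805.4721 — 6 statements merged into one kernel-verified Lean document; each statement's English description precedes it below -/
import Mathlib

section
/- Let X be a reflexive real Banach space and T : X → X* a bounded linear operator that is strictly positive, i.e., ⟨Tx, x⟩ ≥ 0 for all x ∈ X and ⟨Tx, x⟩ ≠ 0 whenever x ≠ 0. Then the range T(X) is dense in X* (in the norm topology of X*). -/
open NormedSpace

theorem stmt_3 (X : Type*) [NormedAddCommGroup X] [NormedSpace ℝ X] [CompleteSpace X]
    (hrefl : Function.Surjective (inclusionInDoubleDual ℝ X))
    (T : X →L[ℝ] StrongDual ℝ X)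
    (hpos : ∀ x : X, 0 ≤ T x x)
    (hstrict : ∀ x : X, x ≠ 0 → T x x ≠ 0) :
    DenseRange (T : X → StrongDual ℝ X) := by
  by_contra h
  -- there exists f₀ outside the closure of the range
  rw [DenseRange, dense_iff_closure_eq] at h
  have : ∃ f₀ : StrongDual ℝ X, f₀ ∉ closure (Set.range T) := by
    by_contra h'
    push_neg at h'
    exact h (Set.eq_univ_of_forall h')
  obtain ⟨f₀, hf₀⟩ := this
  -- the closure of the range as a submodule
  set S : Submodule ℝ (StrongDual ℝ X) :=
    (LinearMap.range (T : X →ₗ[ℝ] StrongDual ℝ X)).topologicalClosure with hS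
  have hScoe : (S : Set (StrongDual ℝ X)) = closure (Set.range T) := by
    simp [hS, Submodule.topologicalClosure_coe, LinearMap.coe_range]
  have hSclosed : IsClosed (S : Set (StrongDual ℝ X)) :=
    Submodule.isClosed_topologicalClosure _
  have hSconvex : Convex ℝ (S : Set (StrongDual ℝ X)) := S.convex
  have hf₀S : f₀ ∉ (S : Set (StrongDual ℝ X)) := by rw [hScoe]; exact hf₀
  obtain ⟨φ, s, hlt, hs⟩ := geometric_hahn_banach_closed_point hSconvex hSclosed hf₀S
  -- φ vanishes on S
  have hzero : ∀ a ∈ S, φ a = 0 := by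
    intro a ha
    by_contra hne
    have hmem : ((s + 1) / φ a) • a ∈ S := S.smul_mem _ ha
    have := hlt _ hmem
    rw [map_smul, smul_eq_mul, div_mul_cancel₀ _ hne] at this
    linarith
  have hs0 : (0 : ℝ) < s := by simpa using hlt 0 S.zero_mem
  have hφne : φ ≠ 0 := by
    intro hφ
    rw [hφ] at hs
    simp at hs
    linarith
  obtain ⟨x, hx⟩ := hrefl φ
  have hxne : x ≠ 0 := by
    rintro rfl
    simp at hx
    exact hφne hx.symm
  have hTx : (T x : StrongDual ℝ X) ∈ S :=
    Submodule.le_topologicalClosure _ ⟨x, rfl⟩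
  have : T x x = 0 := by
    have := hzero _ hTx
    rw [← hx] at this
    simpa [dual_def] using this
  exact hstrict x hxne this
end

section
/- Every positive linear operator T : X → X* from a real Banach space X into its continuous dual (i.e., a linear map, not assumed continuous, with ⟨Tx, x⟩ ≥ 0 for all x ∈ X) is bounded. -/
open NormedSpace Filter Topology

private lemma aux_nonneg (gz c : ℝ) (hc : 0 ≤ c) (h : ∀ t : ℝ, 0 < t → -(t * c) ≤ gz) :
    0 ≤ gz := by
  rcases eq_or_lt_of_le hc with h0 | h0
  · have := h 1 one_pos; rw [← h0] at this; linarith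
  · by_contra hneg
    push_neg at hneg
    have ht : (0:ℝ) < -gz / (2 * c) := div_pos (by linarith) (by linarith)
    have h2 := h _ ht
    have h3 : -(-gz / (2 * c) * c) = gz / 2 := by field_simp
    rw [h3] at h2
    linarith

theorem stmt_8 (X : Type*) [NormedAddCommGroup X] [NormedSpace ℝ X] [CompleteSpace X]
    (T : X →ₗ[ℝ] StrongDual ℝ X)
    (hpos : ∀ x : X, 0 ≤ T x x) :
    ∃ C : ℝ, ∀ x : X, ‖T x‖ ≤ C * ‖x‖ := by
  have hcont : Continuous T := by
    apply T.continuous_of_seq_closed_graph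
    intro u x f hu hTu
    have key : ∀ y : X, 0 ≤ (f - T y) (x - y) := by
      intro y
      have htend : Tendsto (fun n => (T (u n) - T y) (u n - y)) atTop
          (𝓝 ((f - T y) (x - y))) := by
        have h1 : Tendsto (fun n => (T (u n) - T y, u n - y)) atTop
            (𝓝 (f - T y, x - y)) :=
          ((hTu.sub tendsto_const_nhds).prodMk_nhds (hu.sub tendsto_const_nhds))
        exact (isBoundedBilinearMap_apply.continuous.tendsto _).comp h1
      refine ge_of_tendsto' htend fun n => ?_
      have h0 := hpos (u n - y)
      simp only [map_sub, ContinuousLinearMap.sub_apply] at h0 ⊢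
      linarith
    have hz : ∀ z : X, 0 ≤ f z - T x z := by
      intro z
      apply aux_nonneg _ (T z z) (hpos z)
      intro t ht
      have h := key (x - t • z)
      have hxy : x - (x - t • z) = t • z := by abel
      have e : (f - T (x - t • z)) (x - (x - t • z)) =
          t * (f z - T x z) + t * (t * T z z) := by
        rw [hxy]
        simp only [map_sub, map_smul, ContinuousLinearMap.sub_apply,
          ContinuousLinearMap.smul_apply, smul_eq_mul]
        ring
      rw [e] at h
      nlinarith
    have hTx : f = T x := by
      ext z
      have h1 := hz z
      have h2 := hz (-z)
      simp only [map_neg] at h2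
      linarith
    exact hTx
  let T' : X →L[ℝ] StrongDual ℝ X := ⟨T, hcont⟩
  exact ⟨‖T'‖, fun x => T'.le_opNorm x⟩
end

section
/- Let X be a real Banach space and T : X → X* a bounded linear operator that is positive (⟨Tx, x⟩ ≥ 0 for all x) and symmetric (⟨Tx, y⟩ = ⟨Ty, x⟩ for all x, y), and let M be a closed subspace of X on which T is bounded below, i.e., there is c > 0 with ‖Tx‖ ≥ c‖x‖ for all x ∈ M. Then ⟨Tx, x⟩ ≥ (c²/‖T‖) ‖x‖² for all x ∈ M. -/
open NormedSpace

theorem stmt_10 (X : Type*) [NormedAddCommGroup X] [NormedSpace ℝ X] [CompleteSpace X]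
    (T : X →L[ℝ] StrongDual ℝ X)
    (hns : ‖T‖ ≠ 0)
    (hpos : ∀ x : X, 0 ≤ T x x)
    (hsymm : ∀ x y : X, T x y = T y x)
    (M : Submodule ℝ X) (hMcl : IsClosed (M : Set X))
    (c : ℝ) (hc : 0 < c)
    (hbelow : ∀ x ∈ M, c * ‖x‖ ≤ ‖T x‖) :
    ∀ x ∈ M, c ^ 2 / ‖T‖ * ‖x‖ ^ 2 ≤ T x x := by
  have hTnorm : 0 < ‖T‖ := lt_of_le_of_ne (norm_nonneg T) (Ne.symm hns)
  -- Cauchy-Schwarz for the positive symmetric form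
  have hCS : ∀ x y : X, (T x y) ^ 2 ≤ T x x * T y y := by
    intro x y
    have h := discrim_le_zero (a := T y y) (b := 2 * T x y) (c := T x x) ?_
    · unfold discrim at h; nlinarith [h]
    · intro t
      have hq : (T y) y * t ^ 2 + 2 * (T x) y * t + (T x) x
          = T (x + t • y) (x + t • y) := by
        simp only [map_add, map_smul, ContinuousLinearMap.add_apply,
          ContinuousLinearMap.coe_smul', Pi.smul_apply, smul_eq_mul]
        rw [hsymm y x]; ring
      rw [← pow_two t, hq]; exact hpos _
  intro x hx
  -- bound ‖T x‖² ≤ ‖T‖ * T x x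
  have hbound : ‖T x‖ ^ 2 ≤ ‖T‖ * T x x := by
    have h1 : ‖T x‖ ≤ Real.sqrt (‖T‖ * T x x) := by
      apply ContinuousLinearMap.opNorm_le_bound _ (Real.sqrt_nonneg _)
      intro y
      have h2 : (T x y) ^ 2 ≤ (‖T‖ * T x x) * ‖y‖ ^ 2 := by
        have hyy : T y y ≤ ‖T‖ * ‖y‖ ^ 2 := by
          have := (T y).le_opNorm y
          have h3 := T.le_opNorm y
          have h4 : ‖(T y) y‖ ≤ ‖T‖ * ‖y‖ * ‖y‖ :=
            this.trans (by nlinarith [norm_nonneg y])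
          calc T y y ≤ ‖(T y) y‖ := le_abs_self _
            _ ≤ ‖T‖ * ‖y‖ * ‖y‖ := h4
            _ = ‖T‖ * ‖y‖ ^ 2 := by ring
        nlinarith [hCS x y, hpos x, hpos y, hTnorm.le]
      have hnn : (0:ℝ) ≤ ‖T‖ * T x x := mul_nonneg hTnorm.le (hpos x)
      have h5 : |T x y| ≤ Real.sqrt (‖T‖ * T x x) * ‖y‖ := by
        rw [← Real.sqrt_sq_eq_abs]
        calc Real.sqrt ((T x y) ^ 2) ≤ Real.sqrt ((‖T‖ * T x x) * ‖y‖ ^ 2) :=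
              Real.sqrt_le_sqrt h2
          _ = Real.sqrt (‖T‖ * T x x) * ‖y‖ := by
              rw [Real.sqrt_mul hnn, Real.sqrt_sq (norm_nonneg y)]
      simpa using h5
    calc ‖T x‖ ^ 2 ≤ Real.sqrt (‖T‖ * T x x) ^ 2 := by
          apply pow_le_pow_left₀ (norm_nonneg _) h1
      _ = ‖T‖ * T x x := Real.sq_sqrt (mul_nonneg hTnorm.le (hpos x))
  have hlow : c ^ 2 * ‖x‖ ^ 2 ≤ ‖T x‖ ^ 2 := by
    have h := hbelow x hx
    calc c ^ 2 * ‖x‖ ^ 2 = (c * ‖x‖) ^ 2 := by ring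
      _ ≤ ‖T x‖ ^ 2 := pow_le_pow_left₀ (by positivity) h 2
  rw [div_mul_eq_mul_div, div_le_iff₀ hTnorm]
  nlinarith [hbound, hlow]
end

section
/- Let X be a real Banach space and B : X × X → ℝ a symmetric, positive definite bilinear form (an inner product on X) such that B(x, x) ≤ c²‖x‖² for all x ∈ X and some constant c > 0. Let M be a closed subspace of X on which the induced norm is equivalent to the original norm, i.e., there is k > 0 with B(x, x) ≥ k‖x‖² for all x ∈ M. Then M is complemented in X: there exists a closed subspace N of X with X = M ⊕ N (equivalently, there is a bounded linear projection of X onto M). -/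
section Aux

variable {X : Type*} [NormedAddCommGroup X] [NormedSpace ℝ X]

private lemma bil_cs (B : X →ₗ[ℝ] X →ₗ[ℝ] ℝ) (hsymm : ∀ x y : X, B x y = B y x)
    (hpos : ∀ x : X, 0 ≤ B x x) (x y : X) : (B x y) ^ 2 ≤ B x x * B y y := by
  have h : ∀ t : ℝ, 0 ≤ B y y * (t * t) + (2 * B x y) * t + B x x := by
    intro t
    have h0 := hpos (x + t • y)
    simp only [map_add, map_smul, LinearMap.add_apply, LinearMap.smul_apply,
      smul_eq_mul] at h0
    rw [hsymm y x] at h0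
    ring_nf at h0 ⊢
    linarith
  have hd := discrim_le_zero h
  rw [discrim] at hd
  nlinarith

/-- Type synonym for a submodule, to carry a different norm. -/
def Msp (M : Submodule ℝ X) : Type _ := ↥M

variable {M : Submodule ℝ X}

instance : AddCommGroup (Msp M) := inferInstanceAs (AddCommGroup ↥M)
instance : Module ℝ (Msp M) := inferInstanceAs (Module ℝ ↥M)

/-- Identity map out of the synonym. -/
def Msp.out (x : Msp M) : ↥M := x

/-- Identity map into the synonym. -/
def Msp.mk (x : ↥M) : Msp M := x

end Aux

theorem stmt_11 (X : Type*) [NormedAddCommGroup X] [NormedSpace ℝ X] [CompleteSpace X]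
    (B : X →ₗ[ℝ] X →ₗ[ℝ] ℝ)
    (hsymm : ∀ x y : X, B x y = B y x)
    (hposdef : ∀ x : X, x ≠ 0 → 0 < B x x)
    (c : ℝ) (hc : 0 < c)
    (hcont : ∀ x : X, B x x ≤ c ^ 2 * ‖x‖ ^ 2)
    (M : Submodule ℝ X) (hMcl : IsClosed (M : Set X))
    (k : ℝ) (hk : 0 < k)
    (hequiv : ∀ x ∈ M, k * ‖x‖ ^ 2 ≤ B x x) :
    M.ClosedComplemented := by
  haveI : CompleteSpace ↥M := hMcl.completeSpace_coe
  have hB0 : ∀ x : X, 0 ≤ B x x := by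
    intro x
    rcases eq_or_ne x 0 with h | h
    · simp [h]
    · exact (hposdef x h).le
  have hcs : ∀ x y : X, (B x y) ^ 2 ≤ B x x * B y y := bil_cs B hsymm hB0
  -- the inner product space structure on the synonym
  letI core : InnerProductSpace.Core ℝ (Msp M) :=
    { inner := fun u v => B (u.out : X) (v.out : X)
      conj_inner_symm := fun u v => by simpa using hsymm (v.out : X) (u.out : X)
      re_inner_nonneg := fun u => by simpa using hB0 (u.out : X)
      add_left := fun u v w => by
        show B ((u.out : X) + (v.out : X)) _ = _
        simp
      smul_left := fun u v r => by
        show B (r • (u.out : X)) _ = _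
        simp
      definite := fun u h => by
        by_contra hu
        have h1 : (u.out : X) ≠ 0 := by
          exact fun h' => hu (Subtype.ext h')
        exact absurd h (ne_of_gt (hposdef _ h1)) }
  letI : NormedAddCommGroup (Msp M) :=
    InnerProductSpace.Core.toNormedAddCommGroup (𝕜 := ℝ) (F := Msp M)
  letI : InnerProductSpace ℝ (Msp M) := InnerProductSpace.ofCore core.toCore
  have hinner : ∀ u v : Msp M, (inner ℝ u v : ℝ) = B (u.out : X) (v.out : X) := fun _ _ => rfl
  have hnorm : ∀ u : Msp M, ‖u‖ ^ 2 = B (u.out : X) (u.out : X) := by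
    intro u
    rw [← real_inner_self_eq_norm_sq, hinner]
  have sqrtk_pos : (0:ℝ) < Real.sqrt k := Real.sqrt_pos.2 hk
  -- norm comparisons between the two norms
  have hle : ∀ u : Msp M, ‖u‖ ≤ c * ‖(u.out : X)‖ := by
    intro u
    refine le_of_sq_le_sq ?_ (by positivity)
    rw [hnorm]
    calc B (u.out : X) (u.out : X) ≤ c ^ 2 * ‖(u.out : X)‖ ^ 2 := hcont _
      _ = (c * ‖(u.out : X)‖) ^ 2 := by ring
  have hge : ∀ u : Msp M, Real.sqrt k * ‖(u.out : X)‖ ≤ ‖u‖ := by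
    intro u
    refine le_of_sq_le_sq ?_ (norm_nonneg _)
    rw [hnorm, mul_pow, Real.sq_sqrt hk.le]
    exact hequiv _ (u.out).2
  -- the identity continuous linear equivalence, to transfer completeness
  letI eq0 : Msp M ≃ₗ[ℝ] ↥M :=
    { toFun := Msp.out
      invFun := Msp.mk
      map_add' := fun _ _ => rfl
      map_smul' := fun _ _ => rfl
      left_inv := fun _ => rfl
      right_inv := fun _ => rfl }
  letI e : Msp M ≃L[ℝ] ↥M :=
    eq0.toContinuousLinearEquivOfBounds ((Real.sqrt k)⁻¹) c
      (fun u => by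
        rw [inv_mul_eq_div, le_div_iff₀ sqrtk_pos, mul_comm]
        exact hge u)
      (fun v => hle (Msp.mk v))
  haveI : CompleteSpace (Msp M) :=
    (completeSpace_congr (e := e.toLinearEquiv.toEquiv) e.isUniformEmbedding).mpr ‹_›
  -- bound on the functional
  have hbound : ∀ (x : X) (u : Msp M), |B x (u.out : X)| ≤ c * ‖x‖ * ‖u‖ := by
    intro x u
    refine abs_le_of_sq_le_sq ?_ (by positivity)
    calc (B x (u.out : X)) ^ 2 ≤ B x x * B (u.out : X) (u.out : X) := hcs _ _
      _ ≤ (c ^ 2 * ‖x‖ ^ 2) * B (u.out : X) (u.out : X) :=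
          mul_le_mul_of_nonneg_right (hcont x) (hB0 _)
      _ = (c * ‖x‖ * ‖u‖) ^ 2 := by rw [← hnorm]; ring
  -- the Riesz functional
  letI φ : X → (Msp M →L[ℝ] ℝ) := fun x =>
    LinearMap.mkContinuous
      { toFun := fun u => B x (u.out : X)
        map_add' := fun u v => by
          show B x ((u.out : X) + (v.out : X)) = _
          simp
        map_smul' := fun r u => by
          show B x (r • (u.out : X)) = _
          simp }
      (c * ‖x‖)
      (fun u => by
        rw [Real.norm_eq_abs]
        exact hbound x u)
  have hφ_apply : ∀ (x : X) (u : Msp M), φ x u = B x (u.out : X) := fun _ _ => rfl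
  have hφ_norm : ∀ x : X, ‖φ x‖ ≤ c * ‖x‖ := fun x =>
    LinearMap.mkContinuous_norm_le _ (by positivity) _
  -- the projection, via Riesz representation
  letI P : X → Msp M := fun x => (InnerProductSpace.toDual ℝ (Msp M)).symm (φ x)
  have hP : ∀ (x : X) (u : Msp M), (inner ℝ (P x) u : ℝ) = B x (u.out : X) := by
    intro x u
    rw [InnerProductSpace.toDual_symm_apply]
    exact hφ_apply x u
  have hPnorm : ∀ x : X, ‖P x‖ ≤ c * ‖x‖ := by
    intro x
    calc ‖P x‖ = ‖φ x‖ := LinearIsometryEquiv.norm_map _ _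
      _ ≤ c * ‖x‖ := hφ_norm x
  have hPadd : ∀ x y : X, P (x + y) = P x + P y := by
    intro x y
    refine ext_inner_right ℝ fun u => ?_
    rw [inner_add_left, hP, hP, hP, map_add, LinearMap.add_apply]
  have hPsmul : ∀ (r : ℝ) (x : X), P (r • x) = r • P x := by
    intro r x
    refine ext_inner_right ℝ fun u => ?_
    rw [real_inner_smul_left, hP, hP, map_smul, LinearMap.smul_apply, smul_eq_mul]
  -- the final continuous projection onto M
  refine ⟨LinearMap.mkContinuous
    { toFun := fun x => (P x).out
      map_add' := fun x y => by show (P (x + y)).out = (P x).out + (P y).out; rw [hPadd]; rfl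
      map_smul' := fun r x => by show (P (r • x)).out = r • (P x).out; rw [hPsmul]; rfl }
    ((Real.sqrt k)⁻¹ * c) (fun x => ?_), fun x => ?_⟩
  · have h1 : ‖(P x).out‖ = ‖((P x).out : X)‖ := rfl
    have h2 : ‖((P x).out : X)‖ ≤ (Real.sqrt k)⁻¹ * ‖P x‖ := by
      rw [inv_mul_eq_div, le_div_iff₀ sqrtk_pos, mul_comm]
      exact hge (P x)
    calc ‖(P x).out‖ ≤ (Real.sqrt k)⁻¹ * ‖P x‖ := h2
      _ ≤ (Real.sqrt k)⁻¹ * (c * ‖x‖) := by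
          exact mul_le_mul_of_nonneg_left (hPnorm x) (by positivity)
      _ = (Real.sqrt k)⁻¹ * c * ‖x‖ := by ring
  · show (P (x : X)).out = x
    have hPx : P (x : X) = Msp.mk x := by
      refine ext_inner_right ℝ fun u => ?_
      rw [hP]
      rfl
    rw [hPx]
    rfl
end

section
/- Let X be a real Banach space and T : X → X* a linear operator which is injective, positive (⟨Tx, x⟩ ≥ 0 for all x), symmetric (⟨Tx, y⟩ = ⟨Ty, x⟩ for all x, y), and not strictly singular, i.e., there exist an infinite-dimensional closed subspace M of X and a constant c > 0 such that ‖Tx‖ ≥ c‖x‖ for all x ∈ M. Then either X is isomorphic to a Hilbert space, or X contains a nontrivially complemented subspace which is isomorphic to a Hilbert space, i.e., there exists an infinite-dimensional proper closed subspace W of X which is complemented in X and is, with the norm induced from X, isomorphic to a Hilbert space. -/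
open NormedSpace

section Aux
variable {X : Type*} [NormedAddCommGroup X] [NormedSpace ℝ X]

structure GoodOp (X : Type*) [NormedAddCommGroup X] [NormedSpace ℝ X] where
  T : X →ₗ[ℝ] StrongDual ℝ X
  pos : ∀ x, 0 ≤ T x x
  symm : ∀ x y, T x y = T y x
  definite : ∀ x, T x x = 0 → x = 0

def GSyn (G : GoodOp X) : Type _ := X

instance (G : GoodOp X) : AddCommGroup (GSyn G) := inferInstanceAs (AddCommGroup X)
instance (G : GoodOp X) : Module ℝ (GSyn G) := inferInstanceAs (Module ℝ X)

def GoodOp.core (G : GoodOp X) : InnerProductSpace.Core ℝ (GSyn G) where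
  inner x y := G.T x y
  conj_inner_symm x y := by simpa using G.symm y x
  re_inner_nonneg x := by simpa using G.pos x
  add_left x y z := by exact congrArg (fun f : StrongDual ℝ X => f z) (map_add G.T x y)
  smul_left x y r := by exact (congrArg (fun f : StrongDual ℝ X => f y) (map_smul G.T r x)).trans (by simp; rfl)
  definite x h := G.definite x h

noncomputable instance (G : GoodOp X) : NormedAddCommGroup (GSyn G) :=
  @InnerProductSpace.Core.toNormedAddCommGroup ℝ (GSyn G) _ _ _ G.core

noncomputable instance (G : GoodOp X) : InnerProductSpace ℝ (GSyn G) :=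
  InnerProductSpace.ofCore G.core.toCore

def GoodOp.toSyn (G : GoodOp X) : X ≃ₗ[ℝ] GSyn G where
  toFun x := x
  invFun x := x
  map_add' _ _ := rfl
  map_smul' _ _ := rfl
  left_inv _ := rfl
  right_inv _ := rfl

theorem GoodOp.inner_syn (G : GoodOp X) (x y : X) :
    (inner ℝ (G.toSyn x) (G.toSyn y) : ℝ) = G.T x y := rfl

theorem GoodOp.norm_syn (G : GoodOp X) (x : X) :
    ‖G.toSyn x‖ = Real.sqrt (G.T x x) := by
  rw [@norm_eq_sqrt_real_inner (GSyn G) _ _ (G.toSyn x), G.inner_syn]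

theorem GoodOp.norm_syn_sq (G : GoodOp X) (x : X) :
    ‖G.toSyn x‖ ^ 2 = G.T x x := by
  rw [G.norm_syn, Real.sq_sqrt (G.pos x)]

end Aux

/-- A real Hilbert space together with a continuous linear equivalence from `X` onto it:
witnesses that `X` is isomorphic to a Hilbert space. -/
structure HilbertIso (X : Type*) [NormedAddCommGroup X] [NormedSpace ℝ X] where
  carrier : Type
  [grp : NormedAddCommGroup carrier]
  [ips : InnerProductSpace ℝ carrier]
  [cpl : CompleteSpace carrier]
  equiv : X ≃L[ℝ] carrier

set_option maxHeartbeats 1000000 in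
theorem stmt_12 (X : Type*) [NormedAddCommGroup X] [NormedSpace ℝ X] [CompleteSpace X]
    (T : X →ₗ[ℝ] StrongDual ℝ X)
    (hinj : Function.Injective T)
    (hpos : ∀ x : X, 0 ≤ T x x)
    (hsymm : ∀ x y : X, T x y = T y x)
    (hnss : ∃ (M : Submodule ℝ X) (c : ℝ), IsClosed (M : Set X) ∧
      ¬ FiniteDimensional ℝ M ∧ 0 < c ∧ ∀ x ∈ M, c * ‖x‖ ≤ ‖T x‖) :
    Nonempty (HilbertIso X) ∨
      ∃ W : Submodule ℝ X, IsClosed (W : Set X) ∧ ¬ FiniteDimensional ℝ W ∧ W ≠ ⊤ ∧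
        W.ClosedComplemented ∧ Nonempty (HilbertIso W) := by
  classical
  obtain ⟨M, c, hMclosed, hMfd, hc, hM⟩ := hnss
  -- T is continuous by the closed graph theorem
  have hTcont : Continuous T := by
    apply T.continuous_of_seq_closed_graph
    intro u x y hu hTu
    ext z
    have h1 : Filter.Tendsto (fun n => T (u n) z) Filter.atTop (nhds (y z)) := by
      have hev : Continuous fun f : StrongDual ℝ X => f z :=
        (ContinuousLinearMap.apply ℝ ℝ z).continuous
      exact (hev.tendsto y).comp hTu
    have h2 : Filter.Tendsto (fun n => T (u n) z) Filter.atTop (nhds (T x z)) := by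
      have : Filter.Tendsto (fun n => T z (u n)) Filter.atTop (nhds (T z x)) :=
        ((T z).continuous.tendsto x).comp hu
      simpa only [hsymm] using this
    exact tendsto_nhds_unique h1 h2
  let Tc : X →L[ℝ] StrongDual ℝ X := ⟨T, hTcont⟩
  set C := max ‖Tc‖ 1 with hCdef
  have hC1 : (1:ℝ) ≤ C := le_max_right _ _
  have hC0 : (0:ℝ) < C := lt_of_lt_of_le one_pos hC1
  -- Cauchy-Schwarz for the bilinear form
  have hCS : ∀ x y : X, (T x y)^2 ≤ T x x * T y y := by
    intro x y
    have h := discrim_le_zero (a := T y y) (b := 2 * T x y) (c := T x x) ?_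
    · rw [discrim] at h; nlinarith
    · intro t
      have h0 := hpos (x + t • y)
      have heq : T (x + t • y) (x + t • y) = T y y * (t*t) + 2 * T x y * t + T x x := by
        simp only [map_add, map_smul, ContinuousLinearMap.add_apply,
          ContinuousLinearMap.smul_apply, smul_eq_mul]
        rw [hsymm y x]; ring
      linarith [h0, heq ▸ h0]
  -- upper bound
  have hnormTc : ∀ x : X, ‖T x‖ ≤ C * ‖x‖ := by
    intro x
    calc ‖T x‖ = ‖Tc x‖ := rfl
    _ ≤ ‖Tc‖ * ‖x‖ := Tc.le_opNorm x
    _ ≤ C * ‖x‖ := by gcongr; exact le_max_left _ _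
  have hK1 : ∀ x : X, T x x ≤ C * ‖x‖^2 := by
    intro x
    calc T x x ≤ |T x x| := le_abs_self _
    _ = ‖T x x‖ := rfl
    _ ≤ ‖T x‖ * ‖x‖ := (T x).le_opNorm x
    _ ≤ (C * ‖x‖) * ‖x‖ := by gcongr; exact hnormTc x
    _ = C * ‖x‖^2 := by ring
  have hK2 : ∀ x : X, ‖T x‖^2 ≤ C^2 * T x x := by
    intro x
    have hb : ∀ y : X, ‖T x y‖ ≤ Real.sqrt (C^2 * T x x) * ‖y‖ := by
      intro y
      have h1 : (T x y)^2 ≤ T x x * T y y := hCS x y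
      have h2 : T x x * T y y ≤ T x x * (C * ‖y‖^2) := by
        have := hK1 y; nlinarith [hpos x]
      have h3 : (T x y)^2 ≤ (C^2 * T x x) * ‖y‖^2 := by nlinarith [hpos x, norm_nonneg y, hC1, hC0]
      have h4 : ‖T x y‖^2 ≤ (Real.sqrt (C^2 * T x x) * ‖y‖)^2 := by
        rw [mul_pow, Real.sq_sqrt (by nlinarith [hpos x] : (0:ℝ) ≤ C^2 * T x x)]
        calc ‖T x y‖^2 = (T x y)^2 := sq_abs _
        _ ≤ (C^2 * T x x) * ‖y‖^2 := h3
      exact le_of_pow_le_pow_left₀ two_ne_zero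
        (mul_nonneg (Real.sqrt_nonneg _) (norm_nonneg _)) h4
    have := (T x).opNorm_le_bound (Real.sqrt_nonneg (C^2 * T x x)) hb
    calc ‖T x‖^2 ≤ (Real.sqrt (C^2 * T x x))^2 := by
          have h0 := norm_nonneg (T x); nlinarith [this]
    _ = C^2 * T x x := Real.sq_sqrt (by nlinarith [hpos x])
  have hdef : ∀ x : X, T x x = 0 → x = 0 := by
    intro x hx
    apply hinj
    rw [map_zero]
    ext y
    have h1 : (T x y)^2 ≤ 0 := by have := hCS x y; rw [hx] at this; linarith
    have : T x y = 0 := by nlinarith [sq_nonneg (T x y)]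
    simpa using this
  set G : GoodOp X := ⟨T, hpos, hsymm, hdef⟩ with hG
  -- norm comparisons
  have hglob : ∀ x : X, ‖G.toSyn x‖ ≤ Real.sqrt C * ‖x‖ := by
    intro x
    have h4 : ‖G.toSyn x‖^2 ≤ (Real.sqrt C * ‖x‖)^2 := by
      rw [G.norm_syn_sq, mul_pow, Real.sq_sqrt hC0.le]
      exact hK1 x
    exact le_of_pow_le_pow_left₀ two_ne_zero
      (mul_nonneg (Real.sqrt_nonneg _) (norm_nonneg _)) (by simpa using h4)
  have hMlow : ∀ x ∈ M, c * ‖x‖ ≤ C * ‖G.toSyn x‖ := by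
    intro x hx
    have h1 : (c * ‖x‖)^2 ≤ ‖T x‖^2 := by
      have := hM x hx
      nlinarith [mul_nonneg hc.le (norm_nonneg x)]
    have h2 : ‖T x‖^2 ≤ C^2 * ‖G.toSyn x‖^2 := by rw [G.norm_syn_sq]; exact hK2 x
    have h4 : (c * ‖x‖)^2 ≤ (C * ‖G.toSyn x‖)^2 := by rw [mul_pow]; nlinarith
    exact le_of_pow_le_pow_left₀ two_ne_zero
      (mul_nonneg hC0.le (norm_nonneg _)) h4
  -- helper: for closed subspaces of M, the synonym copy is a Banach (Hilbert) subspace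
  have key : ∀ N : Submodule ℝ X, N ≤ M → IsClosed (N : Set X) →
      ∃ e : (↥N ≃L[ℝ] ↥(N.map G.toSyn.toLinearMap)),
        (∀ x : ↥N, ((e x : GSyn G)) = G.toSyn (x : X)) ∧
          CompleteSpace ↥(N.map G.toSyn.toLinearMap) := by
    intro N hNM hNclosed
    let le : ↥N ≃ₗ[ℝ] ↥(N.map G.toSyn.toLinearMap) := G.toSyn.submoduleMap N
    have hle : ∀ x : ↥N, ((le x : GSyn G)) = G.toSyn (x : X) := fun x => rfl
    have hfwd : ∀ x : ↥N, ‖le x‖ ≤ Real.sqrt C * ‖x‖ := by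
      intro x
      have : ‖(le x : GSyn G)‖ ≤ Real.sqrt C * ‖(x : X)‖ := by
        rw [hle x]; exact hglob _
      simpa using this
    have hbwd : ∀ y : ↥(N.map G.toSyn.toLinearMap), ‖le.symm y‖ ≤ (c⁻¹ * C) * ‖y‖ := by
      intro y
      have hxM : ((le.symm y : X)) ∈ M := hNM (le.symm y).2
      have h1 : c * ‖(le.symm y : X)‖ ≤ C * ‖G.toSyn (le.symm y : X)‖ := hMlow _ hxM
      have h2 : G.toSyn ((le.symm y : X)) = (y : GSyn G) := by
        rw [← hle (le.symm y), le.apply_symm_apply]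
      rw [h2] at h1
      have : ‖(le.symm y : X)‖ ≤ c⁻¹ * (C * ‖(y : GSyn G)‖) := by
        rw [← mul_le_mul_iff_of_pos_left hc, ← mul_assoc, mul_inv_cancel₀ hc.ne', one_mul]
        exact h1
      simpa [mul_assoc] using this
    let e : ↥N ≃L[ℝ] ↥(N.map G.toSyn.toLinearMap) :=
      { le with
        continuous_toFun := AddMonoidHomClass.continuous_of_bound le.toLinearMap _ hfwd
        continuous_invFun := AddMonoidHomClass.continuous_of_bound le.symm.toLinearMap _ hbwd }
    haveI hNcs : CompleteSpace ↥N := hNclosed.completeSpace_coe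
    have hcs : CompleteSpace ↥(N.map G.toSyn.toLinearMap) :=
      (completeSpace_congr (e := e.toLinearEquiv.toEquiv) e.isUniformEmbedding).1 hNcs
    exact ⟨e, fun x => rfl, hcs⟩
  -- the synonym copy of M is an infinite-dimensional Hilbert space
  obtain ⟨eM, heM, hMcs⟩ := key M le_rfl hMclosed
  haveI := hMcs
  have hMsfd : ¬ FiniteDimensional ℝ ↥(M.map G.toSyn.toLinearMap) := by
    intro h
    exact hMfd (Module.Finite.equiv eM.symm.toLinearEquiv)
  -- an orthonormal sequence
  obtain ⟨w, b, hb⟩ := exists_hilbertBasis ℝ ↥(M.map G.toSyn.toLinearMap)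
  have hwinf : w.Infinite := by
    by_contra hfin
    rw [Set.not_infinite] at hfin
    have h1 : FiniteDimensional ℝ ↥(Submodule.span ℝ w) := FiniteDimensional.span_of_finite ℝ hfin
    have h2 : IsClosed ((Submodule.span ℝ w :
        Submodule ℝ ↥(M.map G.toSyn.toLinearMap)) : Set ↥(M.map G.toSyn.toLinearMap)) :=
      Submodule.closed_of_finiteDimensional _
    have hd := b.dense_span
    rw [hb, Subtype.range_coe] at hd
    have h3 : (Submodule.span ℝ w : Submodule ℝ ↥(M.map G.toSyn.toLinearMap)) = ⊤ := by
      rw [← h2.submodule_topologicalClosure_eq, hd]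
    rw [h3] at h1
    exact hMsfd (Module.Finite.equiv (Submodule.topEquiv))
  let f : ℕ ↪ w := hwinf.natEmbedding
  have on0 : Orthonormal ℝ (fun n : ℕ => ((f n : w) : ↥(M.map G.toSyn.toLinearMap))) := by
    have hbon := b.orthonormal
    rw [hb] at hbon
    exact hbon.comp f f.injective
  let v : ℕ → GSyn G := fun n => ((f n : w) : ↥(M.map G.toSyn.toLinearMap))
  have onv : Orthonormal ℝ v :=
    on0.comp_linearIsometry (M.map G.toSyn.toLinearMap).subtypeₗᵢ
  have hvM : ∀ n, G.toSyn.symm (v n) ∈ M := by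
    intro n
    obtain ⟨m, hm, hme⟩ := ((f n : w) : ↥(M.map G.toSyn.toLinearMap)).2
    have hme' : G.toSyn m = v n := hme
    rw [← hme', G.toSyn.symm_apply_apply]
    exact hm
  -- inner products expressed via T
  have hTv : ∀ i j, T (G.toSyn.symm (v i)) (G.toSyn.symm (v j)) = (inner ℝ (v i) (v j) : ℝ) := by
    intro i j
    rw [← G.inner_syn, G.toSyn.apply_symm_apply, G.toSyn.apply_symm_apply]
  -- the subspace W
  set g : ℕ → X := fun n => G.toSyn.symm (v (n + 1)) with hgdef
  set z : X := G.toSyn.symm (v 0) with hzdef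
  set S : Submodule ℝ X := Submodule.span ℝ (Set.range g) with hSdef
  set W : Submodule ℝ X := S.topologicalClosure with hWdef
  have hSM : S ≤ M := Submodule.span_le.2 (by rintro - ⟨n, rfl⟩; exact hvM (n+1))
  have hWM : W ≤ M := Submodule.topologicalClosure_minimal S hSM hMclosed
  have hWclosed : IsClosed (W : Set X) := S.isClosed_topologicalClosure
  have hgW : ∀ n, g n ∈ W := fun n =>
    S.le_topologicalClosure (Submodule.subset_span ⟨n, rfl⟩)
  -- linear independence / infinite dimensionality
  have liv : LinearIndependent ℝ (fun n : ℕ => v (n + 1)) :=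
    (onv.comp (fun n : ℕ => n + 1) (fun a b h => by simpa using h)).linearIndependent
  have lig : LinearIndependent ℝ g := by
    have := liv.map' G.toSyn.symm.toLinearMap (LinearMap.ker_eq_bot_of_injective
      G.toSyn.symm.injective)
    exact this
  have hWfd : ¬ FiniteDimensional ℝ ↥W := by
    intro hfd
    have lih : LinearIndependent ℝ (fun n : ℕ => (⟨g n, hgW n⟩ : ↥W)) := by
      apply LinearIndependent.of_comp W.subtype
      exact lig
    have h0 := lih.finrank_eq_zero_of_infinite
    have hsub : Subsingleton ↥W := Module.finrank_zero_iff.mp h0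
    exact lih.ne_zero 0 (Subsingleton.elim _ _)
  -- z is not in W
  have hzW : z ∉ W := by
    intro hzw
    have hWker : W ≤ LinearMap.ker (T z : X →ₗ[ℝ] ℝ) := by
      apply Submodule.topologicalClosure_minimal
      · rw [hSdef, Submodule.span_le]
        rintro - ⟨n, rfl⟩
        have : T z (g n) = (inner ℝ (v 0) (v (n+1)) : ℝ) := hTv 0 (n+1)
        have h0 : (inner ℝ (v 0) (v (n+1)) : ℝ) = 0 := by
          have := onv.2 (i := 0) (j := n+1) (by omega)
          exact this
        exact LinearMap.mem_ker.mpr (this.trans h0)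
      · exact ContinuousLinearMap.isClosed_ker (T z)
    have h1 : T z z = 0 := hWker hzw
    have h2 : T z z = (1:ℝ) := by
      rw [hTv 0 0]
      rw [real_inner_self_eq_norm_sq, onv.1 0]
      norm_num
    rw [h1] at h2
    norm_num at h2
  have hWtop : W ≠ ⊤ := by
    intro h
    exact hzW (h ▸ Submodule.mem_top)
  -- the Hilbert structure on W
  obtain ⟨eW, heW, hWcs⟩ := key W hWM hWclosed
  haveI := hWcs
  have hSW : S ≤ W := S.le_topologicalClosure
  have hvWh : ∀ n, v (n + 1) ∈ (W.map G.toSyn.toLinearMap) := by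
    intro n
    refine ⟨g n, hgW n, ?_⟩
    show G.toSyn (g n) = v (n + 1)
    exact G.toSyn.apply_symm_apply _
  set u : ℕ → ↥(W.map G.toSyn.toLinearMap) := fun n => ⟨v (n + 1), hvWh n⟩ with hudef
  have onu : Orthonormal ℝ u := by
    have h1 : Orthonormal ℝ ((W.map G.toSyn.toLinearMap).subtypeₗᵢ ∘ u) :=
      onv.comp (fun n : ℕ => n + 1) (fun a b h => by simpa using h)
    exact (W.map G.toSyn.toLinearMap).subtypeₗᵢ.orthonormal_comp_iff.mp h1
  have hspan : ⊤ ≤ (Submodule.span ℝ (Set.range u)).topologicalClosure := by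
    intro x _
    obtain ⟨x', hx'W, hx'e⟩ := x.2
    have hx'e' : G.toSyn x' = (x : GSyn G) := hx'e
    have hmem : ∀ y (hyS : y ∈ S) (hy : G.toSyn y ∈ (W.map G.toSyn.toLinearMap)),
        (⟨G.toSyn y, hy⟩ : ↥(W.map G.toSyn.toLinearMap)) ∈ Submodule.span ℝ (Set.range u) := by
      intro y hyS hy
      have h1 : G.toSyn y ∈ Submodule.map G.toSyn.toLinearMap S :=
        Submodule.mem_map_of_mem hyS
      have h2 : Submodule.map G.toSyn.toLinearMap S =
          Submodule.span ℝ (Set.range (fun n : ℕ => v (n + 1))) := by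
        rw [hSdef, Submodule.map_span]
        congr 1
        rw [← Set.range_comp]
        exact congrArg Set.range (funext fun n => G.toSyn.apply_symm_apply _)
      have h3 : Submodule.map (W.map G.toSyn.toLinearMap).subtype (Submodule.span ℝ (Set.range u)) =
          Submodule.span ℝ (Set.range (fun n : ℕ => v (n + 1))) := by
        rw [Submodule.map_span]
        congr 1
        rw [← Set.range_comp]
        rfl
      rw [h2, ← h3] at h1
      obtain ⟨t, ht, hte⟩ := h1
      have : t = (⟨G.toSyn y, hy⟩ : ↥(W.map G.toSyn.toLinearMap)) := Subtype.ext hte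
      rwa [← this]
    have hx'cl : (x' : X) ∈ closure (S : Set X) := by
      rw [← Submodule.topologicalClosure_coe]
      exact hx'W
    obtain ⟨s, hsS, hsl⟩ := mem_closure_iff_seq_limit.mp hx'cl
    have hsWh : ∀ k, G.toSyn (s k) ∈ (W.map G.toSyn.toLinearMap) :=
      fun k => Submodule.mem_map_of_mem (hSW (hsS k))
    have : x ∈ closure ((Submodule.span ℝ (Set.range u) : Submodule ℝ ↥(W.map G.toSyn.toLinearMap)) : Set ↥(W.map G.toSyn.toLinearMap)) := by
      refine mem_closure_iff_seq_limit.mpr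
        ⟨fun k => ⟨G.toSyn (s k), hsWh k⟩, fun k => hmem _ (hsS k) _, ?_⟩
      rw [tendsto_iff_norm_sub_tendsto_zero]
      have hnorm : ∀ k, ‖(⟨G.toSyn (s k), hsWh k⟩ : ↥(W.map G.toSyn.toLinearMap)) - x‖ ≤ Real.sqrt C * ‖s k - x'‖ := by
        intro k
        have h1 : ‖G.toSyn (s k) - (x : GSyn G)‖ ≤ Real.sqrt C * ‖s k - x'‖ := by
          rw [← hx'e', ← map_sub]
          exact hglob _
        exact h1
      refine squeeze_zero (fun k => norm_nonneg _) hnorm ?_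
      have := (tendsto_iff_norm_sub_tendsto_zero.mp hsl).const_mul (Real.sqrt C)
      simpa using this
    exact this
  let bW : HilbertBasis ℕ ℝ ↥(W.map G.toSyn.toLinearMap) := HilbertBasis.mk onu hspan
  have hiso : Nonempty (HilbertIso ↥W) :=
    ⟨{ carrier := lp (fun _ : ℕ => ℝ) 2
       equiv := eW.trans bW.repr.toContinuousLinearEquiv }⟩
  -- the projection onto W
  have hWhM : ∀ wv : ↥(W.map G.toSyn.toLinearMap), G.toSyn.symm ((wv : GSyn G)) ∈ M := by
    intro wv
    obtain ⟨m, hm, hme⟩ := wv.2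
    have hme' : G.toSyn m = (wv : GSyn G) := hme
    rw [← hme', G.toSyn.symm_apply_apply]
    exact hWM hm
  have hbound : ∀ (x : X) (wv : ↥(W.map G.toSyn.toLinearMap)),
      ‖T x (G.toSyn.symm ((wv : GSyn G)))‖ ≤ (‖T x‖ * (c⁻¹ * C)) * ‖wv‖ := by
    intro x wv
    have h1 : ‖T x (G.toSyn.symm ((wv : GSyn G)))‖ ≤ ‖T x‖ * ‖G.toSyn.symm ((wv : GSyn G))‖ :=
      (T x).le_opNorm _
    have h2 : c * ‖G.toSyn.symm ((wv : GSyn G))‖ ≤ C * ‖(wv : GSyn G)‖ := by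
      have := hMlow _ (hWhM wv)
      rwa [G.toSyn.apply_symm_apply] at this
    have h3 : ‖G.toSyn.symm ((wv : GSyn G))‖ ≤ c⁻¹ * (C * ‖(wv : GSyn G)‖) := by
      rw [← mul_le_mul_iff_of_pos_left hc, ← mul_assoc, mul_inv_cancel₀ hc.ne', one_mul]
      exact h2
    have h4 : ‖wv‖ = ‖(wv : GSyn G)‖ := rfl
    calc ‖T x (G.toSyn.symm ((wv : GSyn G)))‖
        ≤ ‖T x‖ * ‖G.toSyn.symm ((wv : GSyn G))‖ := h1
      _ ≤ ‖T x‖ * (c⁻¹ * (C * ‖(wv : GSyn G)‖)) := by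
          gcongr
      _ = (‖T x‖ * (c⁻¹ * C)) * ‖wv‖ := by rw [h4]; ring
  let φ : X →ₗ[ℝ] StrongDual ℝ ↥(W.map G.toSyn.toLinearMap) :=
    { toFun := fun x => LinearMap.mkContinuous
        (((T x).toLinearMap.comp (G.toSyn.symm.toLinearMap)).comp (W.map G.toSyn.toLinearMap).subtype)
        (‖T x‖ * (c⁻¹ * C)) (fun wv => hbound x wv)
      map_add' := by
        intro a b
        ext wv
        simp [LinearMap.mkContinuous_apply]
        rfl
      map_smul' := by
        intro r a
        ext wv
        simp [LinearMap.mkContinuous_apply]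
        exact Or.inl rfl }
  have hφ_apply : ∀ (x : X) (wv : ↥(W.map G.toSyn.toLinearMap)), φ x wv = T x (G.toSyn.symm ((wv : GSyn G))) :=
    fun x wv => rfl
  have hφ_norm : ∀ x, ‖φ x‖ ≤ ‖T x‖ * (c⁻¹ * C) := by
    intro x
    exact LinearMap.mkContinuous_norm_le _
      (mul_nonneg (norm_nonneg _) (mul_nonneg (inv_nonneg.mpr hc.le) hC0.le))
      (fun wv => hbound x wv)
  let P0 : X →ₗ[ℝ] ↥(W.map G.toSyn.toLinearMap) :=
    ((InnerProductSpace.toDual ℝ ↥(W.map G.toSyn.toLinearMap)).symm.toLinearEquiv.toLinearMap).comp φ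
  have hP0 : ∀ x, ‖P0 x‖ ≤ (C * (c⁻¹ * C)) * ‖x‖ := by
    intro x
    have h1 : ‖P0 x‖ = ‖φ x‖ := (InnerProductSpace.toDual ℝ ↥(W.map G.toSyn.toLinearMap)).symm.norm_map _
    calc ‖P0 x‖ ≤ ‖T x‖ * (c⁻¹ * C) := by rw [h1]; exact hφ_norm x
      _ ≤ (C * ‖x‖) * (c⁻¹ * C) := mul_le_mul_of_nonneg_right (hnormTc x)
            (mul_nonneg (inv_nonneg.mpr hc.le) hC0.le)
      _ = (C * (c⁻¹ * C)) * ‖x‖ := by ring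
  let P1 : X →L[ℝ] ↥(W.map G.toSyn.toLinearMap) := P0.mkContinuous _ hP0
  let P : X →L[ℝ] ↥W := (eW.symm.toContinuousLinearMap).comp P1
  have hproj : W.ClosedComplemented := by
    refine ⟨P, ?_⟩
    intro wx
    have hφw : φ (wx : X) = (InnerProductSpace.toDual ℝ ↥(W.map G.toSyn.toLinearMap)) (eW wx) := by
      ext uvec
      rw [InnerProductSpace.toDual_apply_apply, hφ_apply]
      rw [Submodule.coe_inner, heW wx]
      rw [show ((uvec : GSyn G)) = G.toSyn (G.toSyn.symm ((uvec : GSyn G))) from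
        (G.toSyn.apply_symm_apply _).symm, G.inner_syn]
      rw [G.toSyn.symm_apply_apply]
    have hP1 : P1 (wx : X) = eW wx := by
      show P0 (wx : X) = eW wx
      show (InnerProductSpace.toDual ℝ ↥(W.map G.toSyn.toLinearMap)).symm (φ (wx : X)) = eW wx
      rw [hφw, LinearIsometryEquiv.symm_apply_apply]
    show eW.symm (P1 (wx : X)) = wx
    rw [hP1, eW.symm_apply_apply]
  right
  exact ⟨W, hWclosed, hWfd, hWtop, hproj, hiso⟩
end

section
/- Let X be a real Banach space and S : X → X a bounded linear operator. Then the following are equivalent: (a) for every x ∈ X there exists x* ∈ X* such that ‖x*‖² = ‖x‖² = ⟨x*, x⟩ and ⟨x*, Sx⟩ ≥ 0; (b) ‖x + λSx‖ ≥ ‖x‖ for all x ∈ X and all λ > 0. -/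
open NormedSpace Filter Metric

theorem stmt_13 (X : Type*) [NormedAddCommGroup X] [NormedSpace ℝ X] [CompleteSpace X]
    (S : X →L[ℝ] X) :
    (∀ x : X, ∃ f : StrongDual ℝ X, ‖f‖ ^ 2 = ‖x‖ ^ 2 ∧ f x = ‖x‖ ^ 2 ∧ 0 ≤ f (S x)) ↔
    (∀ x : X, ∀ l : ℝ, 0 < l → ‖x‖ ≤ ‖x + l • S x‖) := by
  constructor
  · intro h x l hl
    obtain ⟨f, hf1, hf2, hf3⟩ := h x
    by_cases hx : x = 0
    · simp [hx]
    have hxn : 0 < ‖x‖ := norm_pos_iff.mpr hx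
    have hfn : ‖f‖ = ‖x‖ := by
      nlinarith [norm_nonneg f, norm_nonneg x]
    have h1 : ‖x‖ ^ 2 ≤ f (x + l • S x) := by
      have : f (x + l • S x) = f x + l * f (S x) := by simp
      nlinarith
    have h2 : f (x + l • S x) ≤ ‖f‖ * ‖x + l • S x‖ := by
      have := f.le_opNorm (x + l • S x)
      rw [Real.norm_eq_abs] at this
      exact (le_abs_self _).trans this
    nlinarith
  · intro h x
    by_cases hx : x = 0
    · exact ⟨0, by simp [hx]⟩
    have hxn : 0 < ‖x‖ := norm_pos_iff.mpr hx
    have : Nontrivial X := ⟨⟨x, 0, hx⟩⟩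
    choose f hf1 hf2 using fun l : ℝ => exists_dual_vector' ℝ (x + l • S x)
    set φ : ℝ → WeakDual ℝ X := fun l => StrongDual.toWeakDual (f l) with hφ
    set K : Set (WeakDual ℝ X) := WeakDual.toStrongDual ⁻¹' closedBall 0 1 with hK
    have hKc : IsCompact K := WeakDual.isCompact_closedBall (𝕜 := ℝ) (E := X) 0 1
    have hmem : ∀ l, φ l ∈ K := by
      intro l
      simp [hK, hφ, mem_closedBall, dist_zero_right, hf1 l]
    set F : Filter (WeakDual ℝ X) := Filter.map φ (nhdsWithin 0 (Set.Ioi 0)) with hF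
    have hFne : F.NeBot := Filter.map_neBot
    have hFK : F ≤ Filter.principal K :=
      Filter.le_principal_iff.mpr (Filter.mem_map.mpr (Filter.univ_mem' hmem))
    obtain ⟨g, hgK, hg⟩ := hKc.exists_clusterPt hFK
    -- pointwise bounds for l > 0
    have key : ∀ l : ℝ, 0 < l → ‖x‖ - l * ‖S x‖ ≤ f l x ∧ f l x ≤ ‖x‖ ∧ 0 ≤ f l (S x) := by
      intro l hl
      have hv : (f l) (x + l • S x) = ‖x + l • S x‖ := hf2 l
      have hsum : (f l) (x + l • S x) = f l x + l * f l (S x) := by simp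
      have hub : f l x ≤ ‖x‖ := by
        have := (f l).le_opNorm x
        rw [Real.norm_eq_abs, hf1 l, one_mul] at this
        exact (le_abs_self _).trans this
      have hSb : |f l (S x)| ≤ ‖S x‖ := by
        have := (f l).le_opNorm (S x)
        rwa [Real.norm_eq_abs, hf1 l, one_mul] at this
      have hnorm : ‖x‖ ≤ ‖x + l • S x‖ := h x l hl
      have habs := abs_le.mp hSb
      refine ⟨by nlinarith, hub, ?_⟩
      nlinarith
    -- g x = ‖x‖
    have hgx : g x = ‖x‖ := by
      have hcl : ClusterPt (g x) (Filter.map (fun l => f l x) (nhdsWithin 0 (Set.Ioi 0))) := by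
        have := hg.map (WeakDual.eval_continuous (𝕜 := ℝ) (E := X) x).continuousAt
          (Filter.tendsto_map (f := fun ψ : WeakDual ℝ X => ψ x) (x := F))
        rwa [hF, Filter.map_map] at this
      have htend : Filter.Tendsto (fun l => f l x) (nhdsWithin 0 (Set.Ioi 0)) (nhds ‖x‖) := by
        apply tendsto_of_tendsto_of_tendsto_of_le_of_le'
          (g := fun l : ℝ => ‖x‖ - l * ‖S x‖) (h := fun _ : ℝ => ‖x‖)
        · have hc : Continuous fun l : ℝ => ‖x‖ - l * ‖S x‖ :=
            continuous_const.sub (continuous_id.mul continuous_const)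
          have : Filter.Tendsto (fun l : ℝ => ‖x‖ - l * ‖S x‖) (nhds 0) (nhds ‖x‖) := by
            simpa using hc.tendsto 0
          exact this.mono_left nhdsWithin_le_nhds
        · exact tendsto_const_nhds
        · filter_upwards [self_mem_nhdsWithin] with l hl
          exact (key l hl).1
        · filter_upwards [self_mem_nhdsWithin] with l hl
          exact (key l hl).2.1
      have : ClusterPt (g x) (nhds ‖x‖) := hcl.mono htend
      exact eq_of_nhds_neBot this |>.symm ▸ rfl
    have hgS : 0 ≤ g (S x) := by
      have hcl : ClusterPt (g (S x)) (Filter.map (fun l => f l (S x)) (nhdsWithin 0 (Set.Ioi 0))) := by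
        have := hg.map (WeakDual.eval_continuous (𝕜 := ℝ) (E := X) (S x)).continuousAt
          (Filter.tendsto_map (f := fun ψ : WeakDual ℝ X => ψ (S x)) (x := F))
        rwa [hF, Filter.map_map] at this
      have hle : Filter.map (fun l => f l (S x)) (nhdsWithin 0 (Set.Ioi 0)) ≤
          Filter.principal (Set.Ici (0 : ℝ)) := by
        rw [Filter.le_principal_iff, Filter.mem_map]
        filter_upwards [self_mem_nhdsWithin] with l hl
        exact (key l hl).2.2
      have : g (S x) ∈ closure (Set.Ici (0 : ℝ)) :=
        mem_closure_iff_clusterPt.mpr (hcl.mono hle)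
      rwa [isClosed_Ici.closure_eq] at this
    -- norm of g
    have hgnorm : ‖WeakDual.toStrongDual g‖ ≤ 1 := by
      have := hgK
      simpa [hK, mem_closedBall, dist_zero_right] using this
    refine ⟨‖x‖ • WeakDual.toStrongDual g, ?_, ?_, ?_⟩
    · have h1 : ‖(‖x‖ • WeakDual.toStrongDual g)‖ = ‖x‖ * ‖WeakDual.toStrongDual g‖ := by
        rw [norm_smul, Real.norm_eq_abs, abs_of_nonneg (norm_nonneg x)]
      have h2 : (1 : ℝ) ≤ ‖WeakDual.toStrongDual g‖ := by
        have hb := (WeakDual.toStrongDual g).le_opNorm x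
        have : (WeakDual.toStrongDual g) x = g x := rfl
        rw [this, hgx, Real.norm_eq_abs, abs_of_nonneg (le_of_lt hxn)] at hb
        nlinarith
      have h3 : ‖WeakDual.toStrongDual g‖ = 1 := le_antisymm hgnorm h2
      rw [h1, h3]; ring
    · have : (WeakDual.toStrongDual g) x = g x := rfl
      simp only [ContinuousLinearMap.smul_apply, this, hgx, smul_eq_mul]
      ring
    · have : (WeakDual.toStrongDual g) (S x) = g (S x) := rfl
      simp only [ContinuousLinearMap.smul_apply, this, smul_eq_mul]
      positivity
end
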